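/- Let n ≥ 1 and let Ψ be the opinion-update map defined below. For all vectors x, y ∈ ℝⁿ one has ‖Ψ(x) − Ψ(y)‖₁ ≤ (4γ + ‖W‖₁)·‖x − y‖₁, where ‖v‖₁ = Σᵢ |vᵢ| and ‖W‖₁ = maxⱼ Σᵢ |w_ij| is the maximum absolute column sum of W. -/

import Mathlib

theorem stmt_0
    (n : ℕ) (hn : 1 ≤ n)
    (W : Matrix (Fin n) (Fin n) ℝ) (hW : ∀ i j, 0 ≤ W i j)
    (s : Fin n → ℝ) (hs : ∀ i, s i ∈ Set.Icc (0:ℝ) 1)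
    (g h : ℝ) (hg : g ∈ Set.Icc (0:ℝ) 1) (hh : h ∈ Set.Icc (0:ℝ) 1)
    (β γ : ℝ) (hγ0 : 0 ≤ γ) (hγβ : γ ≤ β)
    (Ψ : (Fin n → ℝ) → (Fin n → ℝ))
    (hΨ : ∀ x : Fin n → ℝ, ∀ i,
      Ψ x i = (1 - (∑ j, W i j) - 2*β + γ*(|x i - h| + |x i - g|)) * s i
        + (∑ j, W i j * x j) + (β - γ*|x i - h|)*h + (β - γ*|x i - g|)*g)
    (Wnorm : ℝ)
    (hWnorm : Wnorm = Finset.univ.sup' (Finset.univ_nonempty_iff.mpr (Fin.pos_iff_nonempty.mp hn)) (fun j => ∑ i, |W i j|))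
    (x y : Fin n → ℝ) :
    (∑ i, |Ψ x i - Ψ y i|) ≤ (4*γ + Wnorm) * ∑ i, |x i - y i| := by
  have key : ∀ i, |Ψ x i - Ψ y i| ≤ 4*γ*|x i - y i| + ∑ j, W i j * |x j - y j| := by
    intro i
    have e : Ψ x i - Ψ y i
        = γ*(|x i - h| - |y i - h|)*(s i - h) + γ*(|x i - g| - |y i - g|)*(s i - g)
          + ∑ j, W i j * (x j - y j) := by
      rw [hΨ, hΨ]
      simp only [mul_sub, Finset.sum_sub_distrib]
      ring
    have hA : |(|x i - h| - |y i - h|)| ≤ |x i - y i| := by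
      have := abs_abs_sub_abs_le_abs_sub (x i - h) (y i - h)
      simpa using this
    have hB : |(|x i - g| - |y i - g|)| ≤ |x i - y i| := by
      have := abs_abs_sub_abs_le_abs_sub (x i - g) (y i - g)
      simpa using this
    have hsh : |s i - h| ≤ 1 := by
      have h1 := (hs i).1; have h2 := (hs i).2
      rw [abs_sub_le_iff]; constructor <;> linarith [hh.1, hh.2]
    have hsg : |s i - g| ≤ 1 := by
      have h1 := (hs i).1; have h2 := (hs i).2
      rw [abs_sub_le_iff]; constructor <;> linarith [hg.1, hg.2]
    calc |Ψ x i - Ψ y i|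
        ≤ |γ*(|x i - h| - |y i - h|)*(s i - h)| + |γ*(|x i - g| - |y i - g|)*(s i - g)|
          + |∑ j, W i j * (x j - y j)| := by rw [e]; exact abs_add_three _ _ _
      _ ≤ γ*|x i - y i| * 1 + γ*|x i - y i| * 1 + ∑ j, W i j * |x j - y j| := by
          have t1 : |γ*(|x i - h| - |y i - h|)*(s i - h)| ≤ γ*|x i - y i| * 1 := by
            rw [abs_mul, abs_mul, abs_of_nonneg hγ0]
            gcongr
          have t2 : |γ*(|x i - g| - |y i - g|)*(s i - g)| ≤ γ*|x i - y i| * 1 := by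
            rw [abs_mul, abs_mul, abs_of_nonneg hγ0]
            gcongr
          have t3 : |∑ j, W i j * (x j - y j)| ≤ ∑ j, W i j * |x j - y j| := by
            refine (Finset.abs_sum_le_sum_abs _ _).trans (le_of_eq ?_)
            refine Finset.sum_congr rfl fun j _ => ?_
            rw [abs_mul, abs_of_nonneg (hW i j)]
          linarith
      _ ≤ 4*γ*|x i - y i| + ∑ j, W i j * |x j - y j| := by
          nlinarith [abs_nonneg (x i - y i)]
  calc (∑ i, |Ψ x i - Ψ y i|)
      ≤ ∑ i, (4*γ*|x i - y i| + ∑ j, W i j * |x j - y j|) :=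
        Finset.sum_le_sum fun i _ => key i
    _ = 4*γ*(∑ i, |x i - y i|) + ∑ j, (∑ i, W i j) * |x j - y j| := by
        rw [Finset.sum_add_distrib, Finset.mul_sum, Finset.sum_comm]
        simp [Finset.sum_mul]
    _ ≤ 4*γ*(∑ i, |x i - y i|) + ∑ j, Wnorm * |x j - y j| := by
        refine add_le_add le_rfl (Finset.sum_le_sum fun j _ => ?_)
        refine mul_le_mul_of_nonneg_right ?_ (abs_nonneg _)
        rw [hWnorm]
        have heq : ∑ i, W i j = ∑ i, |W i j| :=
          Finset.sum_congr rfl fun i _ => (abs_of_nonneg (hW i j)).symm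
        rw [heq]
        exact Finset.le_sup' (fun j => ∑ i, |W i j|) (Finset.mem_univ j)
    _ = (4*γ + Wnorm) * ∑ i, |x i - y i| := by
        rw [← Finset.mul_sum]; ring
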